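/- Let R = R_1 × ⋯ × R_s be a finite product of finite chain rings, where for each k the ring R_k has maximal ideal R_kγ_k, nilpotency index e_k, and residue field of cardinality q_k. Let w be a homogeneous weight on R with average value λ. Let x = (x_1, …, x_s) ∈ R with x_k = u_k·γ_k^{j_k} for a unit u_k ∈ R_k^× and an integer 0 ≤ j_k ≤ e_k, and set i_k = e_k − j_k. Then: if i_k ≥ 2 for some index k, then w(x) = λ; and if i_k ≤ 1 for every k, then w(x) = λ·(1 − (−1)^β/Π_{k : i_k = 1}(q_k − 1)), where β is the number of indices k with i_k = 1. -/

import Mathlib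

open Finset
set_option linter.unusedSectionVars false

section Chain
open scoped Classical

variable {R : Type*} [CommRing R] [Fintype R] [IsLocalRing R]

/-- valuation with respect to γ, capped at e -/
noncomputable def cwVal (γ : R) (e : ℕ) (y : R) : ℕ :=
  Nat.findGreatest (fun m => y ∈ Ideal.span {γ ^ m}) e

variable {γ : R} {e : ℕ}

theorem cw_val_le (y : R) : cwVal γ e y ≤ e := Nat.findGreatest_le e

theorem cw_val_spec (y : R) : y ∈ Ideal.span {γ ^ cwVal γ e y} :=
  Nat.findGreatest_spec (P := fun m => y ∈ Ideal.span {γ ^ m}) (Nat.zero_le e)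
    (by simp [Ideal.mem_span_singleton])

theorem cw_val_ge {y : R} {m : ℕ} (hm : m ≤ e) (h : y ∈ Ideal.span {γ ^ m}) :
    m ≤ cwVal γ e y := by
  by_contra hlt
  exact Nat.findGreatest_is_greatest (Nat.lt_of_not_le hlt) hm h

theorem cw_pow_ne (hγe1 : γ ^ (e - 1) ≠ 0) {a : ℕ} (ha : a < e) : γ ^ a ≠ 0 := by
  intro h
  apply hγe1
  have : γ ^ (e - 1) = γ ^ a * γ ^ (e - 1 - a) := by rw [← pow_add]; congr 1; omega
  rw [this, h, zero_mul]

theorem cw_not_mem (hγe : γ ^ e = 0) (hγe1 : γ ^ (e - 1) ≠ 0)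
    {a b : ℕ} (hab : a < b) (hb : b ≤ e) : γ ^ a ∉ Ideal.span {γ ^ b} := by
  intro h
  rw [Ideal.mem_span_singleton] at h
  obtain ⟨c, hc⟩ := h
  apply hγe1
  have h0 : γ ^ (b + (e - 1 - a)) = 0 := by
    have : γ ^ (b + (e - 1 - a)) = γ ^ e * γ ^ (b + (e - 1 - a) - e) := by
      rw [← pow_add]; congr 1; omega
    rw [this, hγe, zero_mul]
  calc γ ^ (e - 1) = γ ^ a * γ ^ (e - 1 - a) := by rw [← pow_add]; congr 1; omega
    _ = γ ^ b * c * γ ^ (e - 1 - a) := by rw [← hc]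
    _ = c * γ ^ (b + (e - 1 - a)) := by ring
    _ = 0 := by rw [h0, mul_zero]

variable (hmax : IsLocalRing.maximalIdeal R = Ideal.span {γ})
variable (hγe : γ ^ e = 0) (hγe1 : γ ^ (e - 1) ≠ 0)

include hmax hγe in
theorem cw_val_unit (y : R) : ∃ v : Rˣ, y = v * γ ^ cwVal γ e y := by
  obtain ⟨c, hc⟩ := Ideal.mem_span_singleton.mp (cw_val_spec (γ := γ) (e := e) y)
  rcases eq_or_lt_of_le (cw_val_le (γ := γ) (e := e) y) with hE | hlt
  · refine ⟨1, ?_⟩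
    conv_lhs => rw [hc]
    rw [hE, hγe]
    simp
  · have hcu : IsUnit c := by
      rw [← IsLocalRing.notMem_maximalIdeal, hmax]
      intro hcm
      obtain ⟨d, hd⟩ := Ideal.mem_span_singleton.mp hcm
      have hmem : y ∈ Ideal.span {γ ^ (cwVal γ e y + 1)} := by
        rw [Ideal.mem_span_singleton]
        refine ⟨d, ?_⟩
        conv_lhs => rw [hc, hd]
        rw [pow_succ]; ring
      have := cw_val_ge (γ := γ) hlt hmem
      omega
    obtain ⟨v, hv⟩ := hcu
    refine ⟨v, ?_⟩
    conv_lhs => rw [hc, ← hv]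
    exact mul_comm _ _

include hγe in
theorem cw_val_zero_iff (y : R) : cwVal γ e y = e ↔ y = 0 := by
  constructor
  · intro h
    obtain ⟨c, hc⟩ := Ideal.mem_span_singleton.mp (cw_val_spec (γ := γ) (e := e) y)
    rw [hc, h, hγe, zero_mul]
  · intro h
    have h0 : y ∈ Ideal.span {γ ^ e} := by rw [h]; exact Ideal.zero_mem _
    exact le_antisymm (cw_val_le y) (cw_val_ge le_rfl h0)

include hγe hγe1 in
theorem cw_val_of_unit_mul (v : Rˣ) {m : ℕ} (hm : m ≤ e) : cwVal γ e ((v : R) * γ ^ m) = m := by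
  set n := cwVal γ e ((v : R) * γ ^ m) with hn
  have h1 : (v : R) * γ ^ m ∈ Ideal.span {γ ^ m} :=
    Ideal.mem_span_singleton.mpr ⟨v, mul_comm _ _⟩
  have hge : m ≤ n := hn ▸ cw_val_ge hm h1
  rcases eq_or_lt_of_le hge with h | h
  · exact h.symm
  · exfalso
    have hmem : (v : R) * γ ^ m ∈ Ideal.span {γ ^ n} := cw_val_spec _
    obtain ⟨c, hc⟩ := Ideal.mem_span_singleton.mp hmem
    have h2 : γ ^ m ∈ Ideal.span {γ ^ n} := by
      refine Ideal.mem_span_singleton.mpr ⟨(v⁻¹ : Rˣ) * c, ?_⟩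
      have h3 : ((v⁻¹ : Rˣ) : R) * ((v : R) * γ ^ m) = γ ^ m := by
        rw [← mul_assoc, Units.inv_mul, one_mul]
      rw [← h3, hc]; ring
    exact cw_not_mem hγe hγe1 h (hn ▸ cw_val_le _) h2

include hmax hγe in
theorem cw_span_val (y : R) : Ideal.span {y} = Ideal.span {γ ^ cwVal γ e y} := by
  obtain ⟨v, hv⟩ := cw_val_unit hmax hγe y
  apply le_antisymm <;> rw [Ideal.span_singleton_le_span_singleton]
  · refine ⟨v, ?_⟩
    conv_lhs => rw [hv]
    ring
  · refine ⟨(v⁻¹ : Rˣ), ?_⟩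
    conv_rhs => rw [hv]
    rw [mul_comm ((v : R)) (γ ^ _), mul_assoc, Units.mul_inv, mul_one]


/-- the finset of elements of the ideal generated by `γ ^ m` -/
noncomputable def cwS (γ : R) (m : ℕ) : Finset R :=
  univ.filter (fun y => y ∈ Ideal.span {γ ^ m})

theorem mem_cwS {γ : R} {m : ℕ} {y : R} : y ∈ cwS γ m ↔ y ∈ Ideal.span {γ ^ m} := by
  simp [cwS]

include hmax hγe hγe1 in
theorem cw_ann {m : ℕ} (hm : m ≤ e) {z : R} (hz : z * γ ^ m = 0) :
    z ∈ Ideal.span {γ ^ (e - m)} := by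
  obtain ⟨v, hv⟩ := cw_val_unit hmax hγe z
  set a := cwVal γ e z with ha'
  have ha : a ≤ e := cw_val_le z
  have h0 : (v : R) * γ ^ (a + m) = 0 := by
    rw [pow_add, ← mul_assoc, ← hv, hz]
  have hpow : γ ^ (a + m) = 0 := by
    have h1 := congrArg (fun t => ((v⁻¹ : Rˣ) : R) * t) h0
    simpa [← mul_assoc] using h1
  have hge : ¬ a + m < e := fun hlt => cw_pow_ne hγe1 hlt hpow
  set b := a - (e - m) with hb'
  have hab : a = (e - m) + b := by omega
  rw [Ideal.mem_span_singleton]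
  refine ⟨(v : R) * γ ^ b, ?_⟩
  rw [hv, hab, pow_add]; ring

include hγe in
theorem cw_mul_pow_eq_zero {m : ℕ} (hm : m ≤ e) {z : R}
    (hz : z ∈ Ideal.span {γ ^ (e - m)}) : z * γ ^ m = 0 := by
  obtain ⟨d, hd⟩ := Ideal.mem_span_singleton.mp hz
  rw [hd, mul_comm (γ ^ (e - m)) d, mul_assoc, ← pow_add,
    show e - m + m = e by omega, hγe, mul_zero]

include hmax hγe hγe1 in
theorem cw_fiber {m : ℕ} (hm : m ≤ e) (T : Finset R)
    (hT : ∀ y ∈ T, y ∈ Ideal.span {γ ^ m}) :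
    (univ.filter (fun r => r * γ ^ m ∈ T)).card = T.card * (cwS γ (e - m)).card := by
  rw [Finset.card_eq_sum_card_fiberwise (f := fun r : R => r * γ ^ m) (t := T)
    (s := univ.filter (fun r => r * γ ^ m ∈ T))
    (fun r hr => (Finset.mem_filter.mp hr).2)]
  rw [Finset.sum_congr rfl (g := fun _ => (cwS γ (e - m)).card) ?_, Finset.sum_const,
    smul_eq_mul]
  intro y hy
  obtain ⟨c, hc⟩ := Ideal.mem_span_singleton.mp (hT y hy)
  apply Finset.card_bij' (fun r _ => r - c) (fun z _ => z + c)
  · intro r hr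
    rw [Finset.mem_filter, Finset.mem_filter] at hr
    rw [mem_cwS]
    apply cw_ann hmax hγe hγe1 hm
    rw [sub_mul, hr.2, hc, mul_comm, sub_self]
  · intro z hz
    rw [mem_cwS] at hz
    have hz0 : z * γ ^ m = 0 := cw_mul_pow_eq_zero hγe hm hz
    have hy' : (z + c) * γ ^ m = y := by rw [add_mul, hz0, zero_add, hc, mul_comm]
    rw [Finset.mem_filter, Finset.mem_filter]
    refine ⟨⟨Finset.mem_univ _, ?_⟩, hy'⟩
    show (z + c) * γ ^ m ∈ T
    rw [hy']; exact hy
  · intro r _; ring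
  · intro z _; ring

theorem cwS_zero : cwS (R := R) γ 0 = univ := by
  ext y
  simp [cwS, Ideal.mem_span_singleton]

include hγe in
theorem cwS_e : cwS γ e = {0} := by
  ext y
  simp [cwS, hγe, Ideal.mem_span_singleton, zero_dvd_iff, eq_comm]

include hmax hγe hγe1 in
theorem cw_card_mul {m : ℕ} (hm : m ≤ e) :
    Fintype.card R = (cwS γ m).card * (cwS γ (e - m)).card := by
  have h := cw_fiber hmax hγe hγe1 hm (cwS γ m) (fun y hy => mem_cwS.mp hy)
  have huniv : (univ.filter (fun r => r * γ ^ m ∈ cwS γ m)) = univ := by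
    apply Finset.filter_true_of_mem
    intro r _
    rw [mem_cwS, Ideal.mem_span_singleton]
    exact Dvd.intro_left r rfl
  rw [huniv, Finset.card_univ] at h
  exact h

include hmax hγe hγe1 in
theorem cw_card_step {m : ℕ} (hm : m < e) :
    (cwS γ 1).card = (cwS γ (m + 1)).card * (cwS γ (e - m)).card := by
  have h := cw_fiber hmax hγe hγe1 hm.le (cwS γ (m + 1)) (fun y hy => by
    rw [mem_cwS] at hy
    exact Ideal.span_singleton_le_span_singleton.mpr (pow_dvd_pow γ (Nat.le_succ m)) hy)
  rw [← h]
  congr 1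
  ext r
  rw [mem_cwS, Finset.mem_filter, mem_cwS]
  constructor
  · intro hr
    obtain ⟨d, hd⟩ := Ideal.mem_span_singleton.mp hr
    refine ⟨Finset.mem_univ _, Ideal.mem_span_singleton.mpr ⟨d, ?_⟩⟩
    rw [hd, pow_one, pow_succ]; ring
  · rintro ⟨-, hmem⟩
    obtain ⟨c, hc⟩ := Ideal.mem_span_singleton.mp hmem
    have h0 : (r - c * γ) * γ ^ m = 0 := by
      rw [sub_mul, hc, pow_succ]; ring
    have hmem2 := cw_ann hmax hγe hγe1 hm.le h0
    have hle : Ideal.span {γ ^ (e - m)} ≤ Ideal.span {γ ^ 1} :=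
      Ideal.span_singleton_le_span_singleton.mpr (pow_dvd_pow γ (by omega))
    have h2 : r - c * γ ∈ Ideal.span {γ ^ 1} := hle hmem2
    obtain ⟨d, hd⟩ := Ideal.mem_span_singleton.mp h2
    rw [Ideal.mem_span_singleton]
    exact ⟨d + c, by rw [pow_one] at hd ⊢; rw [mul_add, ← hd]; ring⟩

theorem cw_card_ideal_subtype (I : Ideal R) :
    Nat.card I = (univ.filter (fun y => y ∈ I)).card := by
  rw [Nat.card_eq_fintype_card]
  exact Fintype.card_subtype _


theorem cwS_card_pos (a : ℕ) : 0 < (cwS γ a).card := by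
  refine Finset.card_pos.mpr ⟨0, ?_⟩
  rw [mem_cwS]
  exact Ideal.zero_mem _

include hmax in
theorem cw_q_two (q : ℕ) (hq : q = Nat.card (R ⧸ (Ideal.span {γ} : Ideal R))) : 2 ≤ q := by
  have hne : (Ideal.span {γ} : Ideal R) ≠ ⊤ := by
    rw [← hmax]
    exact Ideal.IsMaximal.ne_top inferInstance
  have : Nontrivial (R ⧸ (Ideal.span {γ} : Ideal R)) := Ideal.Quotient.nontrivial_iff.mpr hne
  have : Finite (R ⧸ (Ideal.span {γ} : Ideal R)) :=
    Finite.of_surjective _ Ideal.Quotient.mk_surjective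
  rw [hq]
  have h1 : (1 : Cardinal) < Cardinal.mk (R ⧸ (Ideal.span {γ} : Ideal R)) :=
    Cardinal.one_lt_iff_nontrivial.mpr ‹Nontrivial _›
  have h2 := Nat.card_eq_fintype_card (α := R ⧸ (Ideal.span {γ} : Ideal R))
  have h3 := Fintype.one_lt_card_iff_nontrivial.mpr
    ‹Nontrivial (R ⧸ (Ideal.span {γ} : Ideal R))›
  omega

theorem cw_cardR (q : ℕ) (hq : q = Nat.card (R ⧸ (Ideal.span {γ} : Ideal R))) :
    Fintype.card R = q * (cwS γ 1).card := by
  have h := Submodule.card_eq_card_quotient_mul_card (Ideal.span {γ} : Ideal R)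
  rw [Nat.card_eq_fintype_card] at h
  have h2 : Nat.card (Ideal.span {γ} : Ideal R) = (cwS γ 1).card := by
    rw [cw_card_ideal_subtype]
    congr 1
    ext y
    rw [mem_cwS, pow_one, Finset.mem_filter]
    simp
  rw [h, h2, hq, mul_comm]

include hmax hγe hγe1 in
theorem cw_card_S (q : ℕ) (hq : q = Nat.card (R ⧸ (Ideal.span {γ} : Ideal R)))
    {m : ℕ} (hm : m ≤ e) : (cwS γ m).card = q ^ (e - m) := by
  have key : ∀ d m, m ≤ e → e - m = d → (cwS γ m).card = q ^ d := by
    intro d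
    induction d with
    | zero =>
      intro m hm hd
      have hme : m = e := by omega
      rw [hme, cwS_e hγe, pow_zero, Finset.card_singleton]
    | succ d ih =>
      intro m hm hd
      have hlt : m < e := by omega
      have h1 := cw_card_mul hmax hγe hγe1 hm
      have h2 := cw_card_step hmax hγe hγe1 hlt
      have h3 := cw_cardR (γ := γ) q hq
      have h4 : (cwS γ m).card * (cwS γ (e - m)).card
          = (q * (cwS γ (m + 1)).card) * (cwS γ (e - m)).card := by
        rw [← h1, h3, h2]; ring
      have h5 := Nat.eq_of_mul_eq_mul_right (cwS_card_pos (γ := γ) (e - m)) h4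
      rw [h5, ih (m + 1) (by omega) (by omega), pow_succ]
      ring
  exact key (e - m) m hm rfl

/-- the finset of elements with exact valuation `m` -/
noncomputable def cwE (γ : R) (e m : ℕ) : Finset R :=
  univ.filter (fun y => cwVal γ e y = m)

theorem mem_cwE {γ : R} {e m : ℕ} {y : R} : y ∈ cwE γ e m ↔ cwVal γ e y = m := by
  simp [cwE]

include hγe in
theorem cwE_e : cwE γ e e = {0} := by
  ext y
  rw [mem_cwE, Finset.mem_singleton]
  exact cw_val_zero_iff hγe y

theorem cwE_sdiff {m : ℕ} (hm : m < e) : cwE γ e m = cwS γ m \ cwS γ (m + 1) := by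
  ext y
  rw [mem_cwE, Finset.mem_sdiff, mem_cwS, mem_cwS]
  constructor
  · intro h
    constructor
    · have := cw_val_spec (γ := γ) (e := e) y
      rw [h] at this
      exact this
    · intro hmem
      have := cw_val_ge (γ := γ) (show m + 1 ≤ e by omega) hmem
      omega
  · rintro ⟨h1, h2⟩
    have hge := cw_val_ge (γ := γ) hm.le h1
    rcases eq_or_lt_of_le hge with h | h
    · exact h.symm
    · exfalso
      apply h2
      have hspec := cw_val_spec (γ := γ) (e := e) y
      exact Ideal.span_singleton_le_span_singleton.mpr (pow_dvd_pow γ h) hspec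

include hmax hγe hγe1 in
theorem cwE_card_real (q : ℕ) (hq : q = Nat.card (R ⧸ (Ideal.span {γ} : Ideal R)))
    {m : ℕ} (hm : m < e) :
    ((cwE γ e m).card : ℝ) = (q : ℝ) ^ (e - m) - (q : ℝ) ^ (e - m - 1) := by
  have hsub : cwS γ (m + 1) ⊆ cwS γ m := by
    intro y hy
    rw [mem_cwS] at hy ⊢
    exact Ideal.span_singleton_le_span_singleton.mpr (pow_dvd_pow γ (Nat.le_succ m)) hy
  have hq2 := cw_q_two hmax q hq
  rw [cwE_sdiff hm, Finset.card_sdiff_of_subset hsub,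
    cw_card_S hmax hγe hγe1 q hq hm.le, cw_card_S hmax hγe hγe1 q hq (show m + 1 ≤ e by omega)]
  have hle : q ^ (e - (m + 1)) ≤ q ^ (e - m) :=
    Nat.pow_le_pow_right (by omega) (by omega)
  rw [Nat.cast_sub hle, show e - (m + 1) = e - m - 1 from by omega]
  push_cast
  ring

include hγe hγe1 in
theorem cwE_self_mem {m : ℕ} (hm : m ≤ e) : γ ^ m ∈ cwE γ e m := by
  rw [mem_cwE]
  have := cw_val_of_unit_mul hγe hγe1 (γ := γ) 1 hm
  rwa [Units.val_one, one_mul] at this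

include hmax hγe hγe1 in
theorem cw_sumA (q : ℕ) (hq : q = Nat.card (R ⧸ (Ideal.span {γ} : Ideal R)))
    {m : ℕ} (hm : m ≤ e) :
    ∑ a ∈ Finset.Icc m e, (cwE γ e a).card = q ^ (e - m) := by
  have hmaps : ∀ y ∈ cwS γ m, cwVal γ e y ∈ Finset.Icc m e := by
    intro y hy
    rw [Finset.mem_Icc]
    exact ⟨cw_val_ge hm (mem_cwS.mp hy), cw_val_le y⟩
  have h := Finset.card_eq_sum_card_fiberwise hmaps
  rw [← cw_card_S hmax hγe hγe1 q hq hm, h]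
  apply Finset.sum_congr rfl
  intro a ha
  rw [Finset.mem_Icc] at ha
  congr 1
  ext y
  rw [mem_cwE, Finset.mem_filter, mem_cwS]
  constructor
  · intro hv
    refine ⟨?_, hv⟩
    have hspec := cw_val_spec (γ := γ) (e := e) y
    rw [hv] at hspec
    exact Ideal.span_singleton_le_span_singleton.mpr (pow_dvd_pow γ ha.1) hspec
  · exact fun h => h.2

/-- the per-coordinate factor in the homogeneous weight formula -/
noncomputable def cwH (q e : ℕ) (a : ℕ) : ℝ :=
  if a = e then 1 else if a = e - 1 then -1 / ((q : ℝ) - 1) else 0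

include hmax hγe hγe1 in
theorem cw_sumB (q : ℕ) (hq : q = Nat.card (R ⧸ (Ideal.span {γ} : Ideal R)))
    {m : ℕ} (hm : m ≤ e) :
    ∑ a ∈ Finset.Icc m e, ((cwE γ e a).card : ℝ) * cwH q e a
      = if m = e then 1 else 0 := by
  have hq2 := cw_q_two hmax q hq
  have hqne : (q : ℝ) - 1 ≠ 0 := by
    have : (2 : ℝ) ≤ (q : ℝ) := by exact_mod_cast hq2
    linarith
  rcases eq_or_lt_of_le hm with he' | hlt
  · rw [he', if_pos rfl, Finset.Icc_self, Finset.sum_singleton, cwE_e hγe,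
      Finset.card_singleton, cwH, if_pos rfl]
    norm_num
  · rw [if_neg (by omega)]
    have hsub : ({e - 1, e} : Finset ℕ) ⊆ Finset.Icc m e := by
      intro a ha
      rw [Finset.mem_insert, Finset.mem_singleton] at ha
      rw [Finset.mem_Icc]
      omega
    rw [← Finset.sum_subset hsub ?hz]
    case hz =>
      intro a ha ha2
      rw [Finset.mem_Icc] at ha
      rw [Finset.mem_insert, Finset.mem_singleton] at ha2
      push_neg at ha2
      rw [cwH, if_neg ha2.2, if_neg ha2.1, mul_zero]
    rw [Finset.sum_pair (show e - 1 ≠ e by omega)]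
    have h1 : ((cwE γ e (e - 1)).card : ℝ) = (q : ℝ) - 1 := by
      rw [cwE_card_real hmax hγe hγe1 q hq (show e - 1 < e by omega)]
      rw [show e - (e - 1) = 1 by omega, pow_one, show 1 - 1 = 0 by omega, pow_zero]
    rw [h1, cwE_e hγe, Finset.card_singleton, cwH, cwH, if_neg (by omega), if_pos rfl,
      if_pos rfl]
    field_simp
    norm_num

end Chain

section Helpers
open scoped Classical

theorem card_ideal_filter {A : Type*} [CommRing A] [Fintype A] (I : Ideal A) :
    Nat.card I = (Finset.univ.filter (fun y => y ∈ I)).card := by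
  classical
  rw [Nat.card_eq_fintype_card]
  exact Fintype.card_subtype _

variable {s : ℕ} {R : Fin s → Type*} [∀ k, CommRing (R k)]

theorem cw_pi_dvd_iff {a b : ∀ k, R k} : a ∣ b ↔ ∀ k, a k ∣ b k := by
  constructor
  · rintro ⟨c, rfl⟩ k; exact ⟨c k, rfl⟩
  · intro h; exact ⟨fun k => (h k).choose, funext fun k => (h k).choose_spec⟩

theorem cw_pi_mem_span_iff {a b : ∀ k, R k} :
    b ∈ Ideal.span {a} ↔ ∀ k, b k ∈ Ideal.span {a k} := by
  simp only [Ideal.mem_span_singleton]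
  exact cw_pi_dvd_iff

theorem cw_pi_span_eq {a b : ∀ k, R k} (h : ∀ k, Ideal.span {a k} = Ideal.span {b k}) :
    Ideal.span {a} = Ideal.span {b} := by
  apply le_antisymm <;> rw [Ideal.span_singleton_le_span_singleton, cw_pi_dvd_iff] <;> intro k
  · exact Ideal.span_singleton_le_span_singleton.mp (h k).le
  · exact Ideal.span_singleton_le_span_singleton.mp (h k).ge

end Helpers


/-- `w` is a homogeneous weight on the ring `R` with average value `lam ≥ 0`. -/
def IsHomogeneousWeight {R : Type*} [Ring R] (w : R → ℝ) (lam : ℝ) : Prop :=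
  0 ≤ lam ∧ w 0 = 0 ∧
  (∀ x y : R, Ideal.span {x} = Ideal.span {y} → w x = w y) ∧
  (∀ x : R, x ≠ 0 →
    ∑ᶠ y ∈ ((Ideal.span {x} : Ideal R) : Set R), w y =
      lam * (Nat.card (Ideal.span {x} : Ideal R) : ℝ))

/-- Let `R = R_1 × ⋯ × R_s` be a finite product of finite chain rings
(`R_k` a finite commutative local ring with maximal ideal `R_k γ_k`, nilpotency index
`e_k`, residue field of cardinality `q_k`), and let `w` be a homogeneous weight on `R`
with average value `λ`. Let `x = (x_1, …, x_s)` with `x_k = u_k γ_k^(j_k)`, `u_k` a unit,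
`0 ≤ j_k ≤ e_k`, and set `i_k = e_k - j_k`. If some `i_k ≥ 2` then `w x = λ`; if all
`i_k ≤ 1` then `w x = λ (1 - (-1)^β / ∏_{k : i_k = 1} (q_k - 1))`, where `β` is the
number of indices `k` with `i_k = 1`. -/
theorem product_chain_ring_homogeneous_weight (s : ℕ) (R : Fin s → Type*)
    [∀ k, CommRing (R k)] [∀ k, Fintype (R k)] [∀ k, IsLocalRing (R k)]
    (γ : ∀ k, R k) (hmax : ∀ k, IsLocalRing.maximalIdeal (R k) = Ideal.span {γ k})
    (e : Fin s → ℕ) (he : ∀ k, 0 < e k)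
    (hγe : ∀ k, γ k ^ e k = 0) (hγe1 : ∀ k, γ k ^ (e k - 1) ≠ 0)
    (q : Fin s → ℕ) (hq : ∀ k, q k = Nat.card (R k ⧸ (Ideal.span {γ k} : Ideal (R k))))
    (w : (∀ k, R k) → ℝ) (lam : ℝ) (hw : IsHomogeneousWeight w lam)
    (x : ∀ k, R k) (u : ∀ k, (R k)ˣ) (j : Fin s → ℕ) (hj : ∀ k, j k ≤ e k)
    (hx : ∀ k, x k = (u k : R k) * γ k ^ j k) :
    ((∃ k, 2 ≤ e k - j k) → w x = lam) ∧
    ((∀ k, e k - j k ≤ 1) → w x = lam *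
      (1 - (-1 : ℝ) ^ (Finset.univ.filter (fun k => e k - j k = 1)).card /
        ∏ k ∈ Finset.univ.filter (fun k => e k - j k = 1), ((q k : ℝ) - 1))) := by
  classical
  -- abbreviations
  set W : (Fin s → ℕ) → ℝ := fun t => w (fun k => γ k ^ t k) with hW
  set C : (Fin s → ℕ) → ℝ := fun t => ∏ k, ((cwE (γ k) (e k) (t k)).card : ℝ) with hC
  set H : (Fin s → ℕ) → ℝ := fun t => ∏ k, cwH (q k) (e k) (t k) with hH
  set T : (Fin s → ℕ) → Finset (Fin s → ℕ) :=
    fun t => Fintype.piFinset (fun k => Finset.Icc (t k) (e k)) with hT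
  -- P1 : weight depends only on valuation vector
  have hP1 : ∀ y : ∀ k, R k, w y = W (fun k => cwVal (γ k) (e k) (y k)) := by
    intro y
    apply hw.2.2.1
    exact cw_pi_span_eq (fun k => cw_span_val (hmax k) (hγe k) (y k))
  -- P2 : the recursion from axiom H2
  have hP2 : ∀ t : Fin s → ℕ, (∀ k, t k ≤ e k) → (∀ k0, t k0 < e k0 →
      ∑ a ∈ T t, C a * W a = lam * ∏ k, (q k : ℝ) ^ (e k - t k)) := by
    intro t ht k0 hk0
    set x₀ : ∀ k, R k := fun k => γ k ^ t k with hx₀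
    have hx₀ne : x₀ ≠ 0 := by
      intro h
      have h2 := congrFun h k0
      exact cw_pow_ne (hγe1 k0) hk0 h2
    have heq := hw.2.2.2 x₀ hx₀ne
    set F : Finset (∀ k, R k) := Fintype.piFinset (fun k => cwS (γ k) (t k)) with hF
    have hFset : ((Ideal.span {x₀} : Ideal (∀ k, R k)) : Set (∀ k, R k)) = ↑F := by
      ext y
      simp only [SetLike.mem_coe, Finset.mem_coe, Fintype.mem_piFinset, mem_cwS,
        cw_pi_mem_span_iff, hF, hx₀]
    have hsum : ∑ᶠ y ∈ ((Ideal.span {x₀} : Ideal (∀ k, R k)) : Set (∀ k, R k)), w y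
        = ∑ y ∈ F, w y := by
      rw [hFset, finsum_mem_coe_finset]
    have hcard : ((Nat.card (Ideal.span {x₀} : Ideal (∀ k, R k))) : ℝ)
        = ∏ k, (q k : ℝ) ^ (e k - t k) := by
      rw [card_ideal_filter]
      have hfe : Finset.univ.filter (fun y => y ∈ (Ideal.span {x₀} : Ideal (∀ k, R k))) = F := by
        ext y
        simp only [Finset.mem_filter, Finset.mem_univ, true_and, Fintype.mem_piFinset,
          mem_cwS, cw_pi_mem_span_iff, hF, hx₀]
      rw [hfe, hF, Fintype.card_piFinset]
      push_cast
      apply Finset.prod_congr rfl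
      intro k _
      rw [cw_card_S (hmax k) (hγe k) (hγe1 k) (q k) (hq k) (ht k)]
      push_cast
      ring
    -- fiber the sum over valuation vectors
    have hmaps : ∀ y ∈ F, (fun k => cwVal (γ k) (e k) (y k)) ∈ T t := by
      intro y hy
      rw [Fintype.mem_piFinset] at hy ⊢
      intro k
      rw [Finset.mem_Icc]
      exact ⟨cw_val_ge (ht k) (mem_cwS.mp (hy k)), cw_val_le _⟩
    have hfib := Finset.sum_fiberwise_of_maps_to hmaps w
    have hinner : ∀ a ∈ T t,
        ∑ y ∈ F.filter (fun y => (fun k => cwVal (γ k) (e k) (y k)) = a), w y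
          = C a * W a := by
      intro a ha
      rw [Fintype.mem_piFinset] at ha
      have hfe : F.filter (fun y => (fun k => cwVal (γ k) (e k) (y k)) = a)
          = Fintype.piFinset (fun k => cwE (γ k) (e k) (a k)) := by
        ext y
        rw [Finset.mem_filter, Fintype.mem_piFinset, Fintype.mem_piFinset]
        simp only [mem_cwE, mem_cwS, funext_iff]
        constructor
        · exact fun h => h.2
        · intro h
          refine ⟨fun k => ?_, h⟩
          have h1 := cw_val_spec (γ := γ k) (e := e k) (y k)
          rw [h k] at h1
          have hta : t k ≤ a k := (Finset.mem_Icc.mp (ha k)).1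
          exact Ideal.span_singleton_le_span_singleton.mpr (pow_dvd_pow (γ k) hta) h1
      rw [hfe]
      have hconst : ∀ y ∈ Fintype.piFinset (fun k => cwE (γ k) (e k) (a k)), w y = W a := by
        intro y hy
        rw [Fintype.mem_piFinset] at hy
        rw [hP1 y]
        congr 1
        exact funext fun k => mem_cwE.mp (hy k)
      rw [Finset.sum_congr rfl hconst, Finset.sum_const, Fintype.card_piFinset,
        nsmul_eq_mul]
      simp only [hC]
      push_cast
      ring
    have hfib2 : ∑ y ∈ F, w y = ∑ a ∈ T t, C a * W a := by
      rw [← hfib]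
      exact Finset.sum_congr rfl hinner
    rw [hsum, hfib2] at heq
    rw [heq, hcard]
  -- P3 : the combinatorial identity
  have hP3 : ∀ t : Fin s → ℕ, (∀ k, t k ≤ e k) → (∀ k0, t k0 < e k0 →
      ∑ a ∈ T t, C a * (lam * (1 - H a)) = lam * ∏ k, (q k : ℝ) ^ (e k - t k)) := by
    intro t ht k0 hk0
    have h1 : ∑ a ∈ T t, C a = ∏ k, (q k : ℝ) ^ (e k - t k) := by
      simp only [hC, hT]
      rw [← Finset.prod_univ_sum (t := fun k => Finset.Icc (t k) (e k))
        (f := fun k n => ((cwE (γ k) (e k) n).card : ℝ))]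
      apply Finset.prod_congr rfl
      intro k _
      have h := cw_sumA (hmax k) (hγe k) (hγe1 k) (q k) (hq k) (ht k)
      have h2 : ((∑ a ∈ Finset.Icc (t k) (e k), (cwE (γ k) (e k) a).card : ℕ) : ℝ)
          = ((q k ^ (e k - t k) : ℕ) : ℝ) := by rw [h]
      push_cast at h2
      exact h2
    have h2 : ∑ a ∈ T t, C a * H a = 0 := by
      have hre : ∀ a, C a * H a = ∏ k, (((cwE (γ k) (e k) (a k)).card : ℝ) * cwH (q k) (e k) (a k)) := by
        intro a
        simp only [hC, hH]
        rw [Finset.prod_mul_distrib]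
      rw [Finset.sum_congr rfl (fun a _ => hre a)]
      simp only [hT]
      rw [← Finset.prod_univ_sum (t := fun k => Finset.Icc (t k) (e k))
        (f := fun k n => ((cwE (γ k) (e k) n).card : ℝ) * cwH (q k) (e k) n)]
      apply Finset.prod_eq_zero (Finset.mem_univ k0)
      rw [cw_sumB (hmax k0) (hγe k0) (hγe1 k0) (q k0) (hq k0) hk0.le, if_neg (by omega)]
    have hre2 : ∀ a, C a * (lam * (1 - H a)) = lam * (C a - C a * H a) := by
      intro a; ring
    rw [Finset.sum_congr rfl (fun a _ => hre2 a), ← Finset.mul_sum,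
      Finset.sum_sub_distrib, h1, h2, sub_zero]
  -- positivity of C
  have hCpos : ∀ t : Fin s → ℕ, (∀ k, t k ≤ e k) → 0 < C t := by
    intro t ht
    simp only [hC]
    apply Finset.prod_pos
    intro k _
    have hne : γ k ^ t k ∈ cwE (γ k) (e k) (t k) := cwE_self_mem (hγe k) (hγe1 k) (ht k)
    exact_mod_cast Finset.card_pos.mpr ⟨_, hne⟩
  -- P4 : main induction
  have hP4 : ∀ n : ℕ, ∀ t : Fin s → ℕ, (∀ k, t k ≤ e k) → (∑ k, (e k - t k)) = n →
      W t = lam * (1 - H t) := by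
    intro n
    induction n using Nat.strong_induction_on with
    | _ n ih =>
      intro t ht hsumn
      by_cases hcase : ∀ k, t k = e k
      · have hx0 : (fun k => γ k ^ t k) = (0 : ∀ k, R k) := by
          funext k
          rw [hcase k, hγe k]
          rfl
        have hH1 : H t = 1 := by
          simp only [hH]
          apply Finset.prod_eq_one
          intro k _
          rw [hcase k, cwH, if_pos rfl]
        simp only [hW]
        rw [hx0, hw.2.1, hH1]
        ring
      · push_neg at hcase
        obtain ⟨k0, hk0⟩ := hcase
        have hk0' : t k0 < e k0 := lt_of_le_of_ne (ht k0) hk0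
        have e1 := hP2 t ht k0 hk0'
        have e2 := hP3 t ht k0 hk0'
        have hdiff : ∑ a ∈ T t, (C a * W a - C a * (lam * (1 - H a))) = 0 := by
          rw [Finset.sum_sub_distrib, e1, e2, sub_self]
        have ht_mem : t ∈ T t := by
          rw [hT, Fintype.mem_piFinset]
          intro k
          rw [Finset.mem_Icc]
          exact ⟨le_rfl, ht k⟩
        have hzero : ∀ a ∈ T t, a ≠ t → C a * W a - C a * (lam * (1 - H a)) = 0 := by
          intro a haT hane
          rw [hT, Fintype.mem_piFinset] at haT
          have hale : ∀ k, t k ≤ a k ∧ a k ≤ e k := by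
            intro k
            have := haT k
            rw [Finset.mem_Icc] at this
            exact this
          have hexlt : ∃ k1, t k1 < a k1 := by
            by_contra hno
            push_neg at hno
            apply hane
            funext k
            exact le_antisymm (hno k) (hale k).1
          obtain ⟨k1, hk1⟩ := hexlt
          have hlt : ∑ k, (e k - a k) < n := by
            rw [← hsumn]
            apply Finset.sum_lt_sum
            · intro k _
              have := hale k
              omega
            · refine ⟨k1, Finset.mem_univ _, ?_⟩
              have := hale k1
              omega
          rw [ih _ hlt a (fun k => (hale k).2) rfl]
          ring
        have hsingle := Finset.sum_eq_single_of_mem t ht_mem hzero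
        rw [hdiff] at hsingle
        have hfact : C t * (W t - lam * (1 - H t)) = 0 := by
          rw [mul_sub]
          exact hsingle.symm
        have hCt := hCpos t ht
        have := mul_eq_zero.mp hfact
        rcases this with h | h
        · exact absurd h (ne_of_gt hCt)
        · linarith [sub_eq_zero.mp h]
  -- evaluate w x
  have hxval : w x = lam * (1 - H j) := by
    have h1 := hP1 x
    have h2 : (fun k => cwVal (γ k) (e k) (x k)) = j := by
      funext k
      rw [hx k]
      exact cw_val_of_unit_mul (hγe k) (hγe1 k) (u k) (hj k)
    rw [h1, h2]
    exact hP4 (∑ k, (e k - j k)) j hj rfl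
  have hq2 : ∀ k, 2 ≤ q k := fun k => cw_q_two (hmax k) (q k) (hq k)
  constructor
  · rintro ⟨k0, hk0⟩
    have hH0 : H j = 0 := by
      simp only [hH]
      apply Finset.prod_eq_zero (Finset.mem_univ k0)
      have h1 : j k0 ≠ e k0 := by have := hj k0; omega
      have h2 : j k0 ≠ e k0 - 1 := by have := hj k0; omega
      rw [cwH, if_neg h1, if_neg h2]
    rw [hxval, hH0]
    ring
  · intro hall
    have hsplit := Finset.prod_filter_mul_prod_filter_not Finset.univ
      (fun k => e k - j k = 1) (fun k => cwH (q k) (e k) (j k))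
    have hnot : ∏ k ∈ Finset.univ.filter (fun k => ¬ (e k - j k = 1)),
        cwH (q k) (e k) (j k) = 1 := by
      apply Finset.prod_eq_one
      intro k hk
      rw [Finset.mem_filter] at hk
      have h1 : j k = e k := by have := hj k; have := hall k; omega
      rw [cwH, if_pos h1]
    have hyes : ∏ k ∈ Finset.univ.filter (fun k => e k - j k = 1),
        cwH (q k) (e k) (j k)
        = ∏ k ∈ Finset.univ.filter (fun k => e k - j k = 1), (-1 / ((q k : ℝ) - 1)) := by
      apply Finset.prod_congr rfl
      intro k hk
      rw [Finset.mem_filter] at hk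
      have h1 : j k ≠ e k := by have := hj k; omega
      have h2 : j k = e k - 1 := by have := hj k; omega
      rw [cwH, if_neg h1, if_pos h2]
    have hHval : H j = (-1 : ℝ) ^ (Finset.univ.filter (fun k => e k - j k = 1)).card /
        ∏ k ∈ Finset.univ.filter (fun k => e k - j k = 1), ((q k : ℝ) - 1) := by
      simp only [hH]
      rw [← hsplit, hnot, mul_one, hyes, Finset.prod_div_distrib,
        Finset.prod_const]
    rw [hxval, hHval]
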